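/- Let G be a topological abelian group (written additively) and F ⊆ G a subset satisfying F = closure(interior F). Define the Harvey–Lawson dual of F by F̃ := {x ∈ G : −x ∉ interior F}. Then F̃ also satisfies F̃ = closure(interior F̃). -/

import Mathlib

/-- The topological condition (T) of being the closure of one's own interior is preserved
under Harvey–Lawson duality `F̃ = {x | -x ∉ interior F}`. -/
theorem hl_dual_preserves_T {G : Type*} [TopologicalSpace G] [AddCommGroup G]
    [IsTopologicalAddGroup G] (F : Set G) (hF : F = closure (interior F)) :
    {x : G | -x ∉ interior F} =
      closure (interior {x : G | -x ∉ interior F}) := by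
  have hS : (interior F)ᶜ = closure (interior (interior F)ᶜ) := by
    rw [interior_compl, ← hF, closure_compl]
  have hset : {x : G | -x ∉ interior F} = (Homeomorph.neg G) ⁻¹' (interior F)ᶜ := rfl
  rw [hset, ← (Homeomorph.neg G).preimage_interior, ← (Homeomorph.neg G).preimage_closure,
    ← hS]
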